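/- Let X be a metric space and F_n, F : X → (-∞, ∞] with F_n Γ-converging to F. If (u_n) is a sequence in X with a convergent subsequence and F_n(u_n) − inf_X F_n → 0, then F attains its minimum on X, and every cluster point u of (u_n) satisfies F(u) = min_X F = lim (along the subsequence) of inf_X F_n. -/

import Mathlib

open Filter Topology

/-- In `EReal`, if `a ≤ b + ε` for every positive real `ε`, then `a ≤ b`. -/
lemma ereal_le_of_forall_pos_le_add {a b : EReal} (h : ∀ ε : ℝ, 0 < ε → a ≤ b + ε) : a ≤ b := by
  induction b with
  | bot => simpa using h 1 one_pos
  | coe r =>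
    induction a with
    | bot => exact bot_le
    | coe s =>
      have h' : ∀ ε : ℝ, 0 < ε → s ≤ r + ε := by
        intro ε hε
        have := h ε hε
        rw [← EReal.coe_add, EReal.coe_le_coe_iff] at this
        exact this
      exact_mod_cast le_of_forall_pos_le_add h'
    | top =>
      have := h 1 one_pos
      rw [← EReal.coe_add] at this
      exact absurd this (not_le.2 (EReal.coe_lt_top _))
  | top => exact le_top

/-- Adding a real constant on the right commutes with `liminf` over `EReal`. -/
lemma ereal_liminf_add_const (u : ℕ → EReal) (c : ℝ) :
    liminf (fun n => u n + (c : EReal)) atTop = liminf u atTop + (c : EReal) := by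
  have hmono : Monotone (fun x : EReal => x + (c : EReal)) :=
    fun a b hab => add_le_add_left hab _
  have hcont : ContinuousAt (fun x : EReal => x + (c : EReal)) (liminf u atTop) := by
    have := EReal.continuousAt_add (p := (liminf u atTop, (c : EReal)))
      (Or.inr (EReal.coe_ne_bot c)) (Or.inr (EReal.coe_ne_top c))
    have hpt : ContinuousAt (fun x : EReal => (x, (c : EReal))) (liminf u atTop) :=
      ContinuousAt.prodMk continuousAt_id continuousAt_const
    have hcomp : ContinuousAt
        ((fun p : EReal × EReal => p.1 + p.2) ∘ (fun x : EReal => (x, (c : EReal))))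
        (liminf u atTop) := ContinuousAt.comp this hpt
    exact hcomp
  simpa [Function.comp_def] using (hmono.map_liminf_of_continuousAt u hcont).symm

/-- Fundamental theorem of Γ-convergence: if `Fₙ` Γ-converges to `F` on a metric space
`X`, `(uₙ)` has a convergent subsequence and `Fₙ(uₙ) - inf Fₙ → 0`, then `F` attains its
minimum, every cluster point `w` of `(uₙ)` is a minimizer of `F`, and along the
convergent subsequence `inf Fₙ → min F = F(v)`. -/
theorem gamma_convergence_fundamental {X : Type*} [MetricSpace X]
    (Fn : ℕ → X → EReal) (F : X → EReal)
    (hFbot : ∀ x, F x ≠ ⊥) (hFnbot : ∀ n x, Fn n x ≠ ⊥)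
    (hliminf : ∀ (u : X) (un : ℕ → X), Tendsto un atTop (𝓝 u) →
      F u ≤ liminf (fun n => Fn n (un n)) atTop)
    (hrecovery : ∀ u : X, ∃ un : ℕ → X, Tendsto un atTop (𝓝 u) ∧
      Tendsto (fun n => Fn n (un n)) atTop (𝓝 (F u)))
    (un : ℕ → X) (φ : ℕ → ℕ) (hφ : StrictMono φ) (v : X)
    (hconv : Tendsto (un ∘ φ) atTop (𝓝 v))
    (hmin : Tendsto (fun n => Fn n (un n) - ⨅ x, Fn n x) atTop (𝓝 0)) :
    (∃ x₀, F x₀ = ⨅ x, F x) ∧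
    (∀ w : X, MapClusterPt w atTop un → F w = ⨅ x, F x) ∧
    Tendsto (fun n => ⨅ x, Fn (φ n) x) atTop (𝓝 (F v)) := by
  set m : ℕ → EReal := fun n => ⨅ x, Fn n x with hm
  -- Eventually `Fₙ(uₙ) ≤ mₙ + ε` for each positive ε.
  have hev : ∀ ε : ℝ, 0 < ε → ∀ᶠ n in atTop, Fn n (un n) ≤ m n + (ε : EReal) := by
    intro ε hε
    have h0 : (0 : EReal) < (ε : EReal) := by exact_mod_cast hε
    filter_upwards [hmin (Iio_mem_nhds h0)] with n hn
    replace hn : Fn n (un n) - m n < (ε : EReal) := hn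
    rcases eq_or_ne (m n) ⊥ with hb | hb
    · rw [hb, EReal.sub_bot (hFnbot n (un n))] at hn
      exact absurd hn not_top_lt
    · rcases eq_or_ne (m n) ⊤ with ht | ht
      · rw [ht, EReal.top_add_of_ne_bot (EReal.coe_ne_bot ε)]
        exact le_top
      · have := (EReal.sub_lt_iff (Or.inl hb) (Or.inl ht)).1 hn
        rw [add_comm] at this
        exact this.le
  -- Key estimate: for any convergent subsequence, `F` at the limit is ≤ liminf of infima.
  have key : ∀ (ψ : ℕ → ℕ), StrictMono ψ → ∀ w : X, Tendsto (un ∘ ψ) atTop (𝓝 w) →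
      F w ≤ liminf (fun k => m (ψ k)) atTop := by
    intro ψ hψ w hw
    classical
    set z : ℕ → X := fun n => if ∃ k, ψ k = n then un n else w with hzdef
    have hzψ : ∀ k, z (ψ k) = un (ψ k) := fun k => by
      simp only [z]; exact if_pos ⟨k, rfl⟩
    have hztend : Tendsto z atTop (𝓝 w) := by
      rw [tendsto_atTop'] at hw ⊢
      intro s hs
      obtain ⟨K, hK⟩ := hw s hs
      refine ⟨ψ K, fun n hn => ?_⟩
      by_cases h : ∃ k, ψ k = n
      · obtain ⟨k, rfl⟩ := h
        rw [hzψ k]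
        exact hK k (hψ.le_iff_le.1 hn)
      · simp only [z, if_neg h]
        exact mem_of_mem_nhds hs
    have h1 : F w ≤ liminf (fun n => Fn n (z n)) atTop := hliminf w z hztend
    have h2 : liminf (fun n => Fn n (z n)) atTop
        ≤ liminf (fun k => Fn (ψ k) (un (ψ k))) atTop := by
      have hle : liminf (fun n => Fn n (z n)) atTop
          ≤ liminf (fun n => Fn n (z n)) (map ψ atTop) :=
        liminf_le_liminf_of_le hψ.tendsto_atTop
      rw [← liminf_comp] at hle
      have hcomp : ((fun n => Fn n (z n)) ∘ ψ) = fun k => Fn (ψ k) (un (ψ k)) :=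
        funext fun k => by simp [Function.comp, hzψ k]
      rwa [hcomp] at hle
    refine ereal_le_of_forall_pos_le_add fun ε hε => ?_
    have hevψ : ∀ᶠ k in atTop, Fn (ψ k) (un (ψ k)) ≤ m (ψ k) + (ε : EReal) :=
      hψ.tendsto_atTop.eventually (hev ε hε)
    have h3 : liminf (fun k => Fn (ψ k) (un (ψ k))) atTop
        ≤ liminf (fun k => m (ψ k) + (ε : EReal)) atTop := liminf_le_liminf hevψ
    calc F w ≤ liminf (fun k => Fn (ψ k) (un (ψ k))) atTop := h1.trans h2
      _ ≤ liminf (fun k => m (ψ k) + (ε : EReal)) atTop := h3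
      _ = liminf (fun k => m (ψ k)) atTop + (ε : EReal) := ereal_liminf_add_const _ ε
  -- Upper bound: `limsup m ≤ F x` for every `x`, via recovery sequences.
  have hA : limsup m atTop ≤ ⨅ x, F x := by
    refine le_iInf fun x => ?_
    obtain ⟨xn, _, hFx⟩ := hrecovery x
    calc limsup m atTop ≤ limsup (fun n => Fn n (xn n)) atTop :=
          limsup_le_limsup (Eventually.of_forall fun n => iInf_le _ _)
      _ = F x := hFx.limsup_eq
  have hsubφ : ∀ (ψ : ℕ → ℕ), StrictMono ψ →
      limsup (fun k => m (ψ k)) atTop ≤ limsup m atTop := by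
    intro ψ hψ
    have := limsup_le_limsup_of_le (u := m) hψ.tendsto_atTop
    rwa [← limsup_comp] at this
  -- Combined chain for any cluster point.
  have main : ∀ (ψ : ℕ → ℕ), StrictMono ψ → ∀ w : X, Tendsto (un ∘ ψ) atTop (𝓝 w) →
      F w = ⨅ x, F x := by
    intro ψ hψ w hw
    refine le_antisymm ?_ (iInf_le _ _)
    calc F w ≤ liminf (fun k => m (ψ k)) atTop := key ψ hψ w hw
      _ ≤ limsup (fun k => m (ψ k)) atTop := liminf_le_limsup
      _ ≤ limsup m atTop := hsubφ ψ hψ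
      _ ≤ ⨅ x, F x := hA
  have hFv : F v = ⨅ x, F x := main φ hφ v hconv
  refine ⟨⟨v, hFv⟩, ?_, ?_⟩
  · intro w hw
    obtain ⟨ψ, hψ, hwψ⟩ := TopologicalSpace.FirstCountableTopology.tendsto_subseq hw
    exact main ψ hψ w hwψ
  · refine tendsto_of_le_liminf_of_limsup_le ?_ ?_
    · exact (key φ hφ v hconv)
    · calc limsup (fun k => m (φ k)) atTop ≤ limsup m atTop := hsubφ φ hφ
        _ ≤ ⨅ x, F x := hA
        _ = F v := hFv.symm
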